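/- Let m ≥ 1, let ρ̌ > 0 and ρ̂ > 0 with ρ̂/ρ̌ an integer ≥ 2, and let I(M̂) := B_{ρ̂/2}(M̂) ∩ Δ_ρ̌ for nonempty M̂ ⊆ Δ_ρ̂. Then for every nonempty M̂ ⊆ Δ_ρ̂: (i) M̂ ⊆ I(M̂) and dist_H(I(M̂), M̂) ≤ ρ̂/2; (ii) B_{ρ̂/2}(M̂) ⊆ B_{ρ̌/2}(I(M̂)), i.e. I(M̂) is a Voronoi cover of M̂ in Δ_ρ̌; and (iii) every nonempty M̌ ⊆ Δ_ρ̌ with B_{ρ̂/2}(M̂) ⊆ B_{ρ̌/2}(M̌) satisfies I(M̂) ⊆ M̌, i.e. I(M̂) is the minimal Voronoi cover. -/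

import Mathlib

noncomputable section

/-- The grid `Δ_ρ = ρℤ^m` in `ℝ^m` (with the maximum norm). -/
def grid (m : ℕ) (ρ : ℝ) : Set (Fin m → ℝ) := {x | ∀ j, ∃ k : ℤ, x j = ρ * k}

/-- `B_δ(A)`: the closed `δ`-neighbourhood of `A` in the maximum norm. -/
def nbhd (m : ℕ) (δ : ℝ) (A : Set (Fin m → ℝ)) : Set (Fin m → ℝ) :=
  {x | Metric.infDist x A ≤ δ}

/-- The restriction operator `R(M̌) = B_{ρ̂/2}(M̌) ∩ Δ_ρ̂`. -/
def Rop (m : ℕ) (rh : ℝ) (M : Set (Fin m → ℝ)) : Set (Fin m → ℝ) :=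
  nbhd m (rh / 2) M ∩ grid m rh

/-- The interpolation operator `I(M̂) = B_{ρ̂/2}(M̂) ∩ Δ_ρ̌`. -/
def Iop (m : ℕ) (rc rh : ℝ) (M : Set (Fin m → ℝ)) : Set (Fin m → ℝ) :=
  nbhd m (rh / 2) M ∩ grid m rc

lemma clamp_round (s : ℝ) (K : ℤ) (hK : 0 ≤ K) (ε : ℝ) (hε : 0 ≤ ε)
    (hs : |s| ≤ (K : ℝ) + 1/2 + ε) :
    ∃ r : ℤ, |r| ≤ K ∧ |s - (r : ℝ)| ≤ 1/2 + ε := by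
  have hround := abs_sub_round s
  have habs := abs_le.mp hs
  refine ⟨max (-K) (min K (round s)), ?_, ?_⟩
  · rw [abs_le]
    exact ⟨le_max_left _ _, max_le (by omega) (min_le_left _ _)⟩
  · rcases lt_or_ge (round s) (-K) with h1 | h1
    · have : max (-K) (min K (round s)) = -K := by omega
      rw [this]
      have h1' : (round s : ℝ) ≤ -K - 1 := by exact_mod_cast Int.le_sub_one_of_lt h1 |>.trans (by linarith)
      rw [abs_le] at hround ⊢
      push_cast
      constructor <;> linarith
    rcases lt_or_ge K (round s) with h2 | h2
    · have : max (-K) (min K (round s)) = K := by omega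
      rw [this]
      have h2' : ((K : ℝ) + 1) ≤ round s := by exact_mod_cast h2
      rw [abs_le] at hround ⊢
      constructor <;> linarith
    · have : max (-K) (min K (round s)) = round s := by omega
      rw [this]
      calc |s - (round s : ℝ)| ≤ 1/2 := hround
        _ ≤ 1/2 + ε := by linarith

theorem stmt16 (m : ℕ) (hm : 1 ≤ m) (rc rh : ℝ) (hrc : 0 < rc) (hrh : 0 < rh)
    (n : ℕ) (hn : 2 ≤ n) (hq : rh = (n : ℝ) * rc)
    (Mh : Set (Fin m → ℝ)) (hMh : Mh ⊆ grid m rh) (hne : Mh.Nonempty) :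
    -- (i) `M̂ ⊆ I(M̂)` and `I(M̂)` is within Hausdorff distance `ρ̂/2` of `M̂`
    (Mh ⊆ Iop m rc rh Mh ∧
      EMetric.hausdorffEdist (Iop m rc rh Mh) Mh ≤ ENNReal.ofReal (rh / 2)) ∧
    -- (ii) `I(M̂)` is a Voronoi cover of `M̂` in `Δ_ρ̌`
    nbhd m (rh / 2) Mh ⊆ nbhd m (rc / 2) (Iop m rc rh Mh) ∧
    -- (iii) `I(M̂)` is contained in every Voronoi cover of `M̂` in `Δ_ρ̌`
    (∀ Mc : Set (Fin m → ℝ), Mc ⊆ grid m rc → Mc.Nonempty →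
      nbhd m (rh / 2) Mh ⊆ nbhd m (rc / 2) Mc → Iop m rc rh Mh ⊆ Mc) := by
  have hsub : Mh ⊆ Iop m rc rh Mh := by
    intro x hx
    refine ⟨by simpa [nbhd, Metric.infDist_zero_of_mem hx] using by positivity, ?_⟩
    intro j
    obtain ⟨k, hk⟩ := hMh hx j
    exact ⟨n * k, by rw [hk, hq]; push_cast; ring⟩
  refine ⟨⟨hsub, ?_⟩, ?_, ?_⟩
  · -- Hausdorff distance
    apply EMetric.hausdorffEdist_le_of_infEdist
    · intro x hx
      have h1 : Metric.infDist x Mh ≤ rh / 2 := hx.1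
      rw [Metric.infDist] at h1
      exact (ENNReal.le_ofReal_iff_toReal_le (Metric.infEdist_ne_top hne) (by positivity)).mpr h1
    · intro y hy
      rw [EMetric.infEdist_zero_of_mem (hsub hy)]
      exact zero_le
  · -- (ii)
    intro x hx
    have hx' : Metric.infDist x Mh ≤ rh / 2 := hx
    show Metric.infDist x (Iop m rc rh Mh) ≤ rc / 2
    refine le_of_forall_pos_le_add ?_
    intro ε hε
    obtain ⟨z, hz, hdz⟩ := (Metric.infDist_lt_iff hne).mp
      (lt_of_le_of_lt hx' (by linarith : rh / 2 < rh / 2 + ε))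
    set K : ℤ := (n : ℤ) / 2 with hKdef
    have hK0 : (0 : ℤ) ≤ K := by positivity
    have hKn1 : (n : ℝ) ≤ 2 * K + 1 := by exact_mod_cast (by omega : (n : ℤ) ≤ 2 * K + 1)
    have hKn2 : 2 * (K : ℝ) ≤ n := by exact_mod_cast (by omega : 2 * K ≤ (n : ℤ))
    have hcoord : ∀ j, |(x j - z j) / rc| ≤ (K : ℝ) + 1/2 + ε / rc := by
      intro j
      have h1 : dist (x j) (z j) ≤ dist x z := dist_le_pi_dist x z j
      rw [Real.dist_eq] at h1
      rw [abs_div, abs_of_pos hrc, div_le_iff₀ hrc]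
      have : rh / 2 + ε ≤ ((K : ℝ) + 1/2 + ε / rc) * rc := by
        have hdiv : ε / rc * rc = ε := div_mul_cancel₀ ε hrc.ne'
        rw [hq]; nlinarith
      linarith
    choose r hr1 hr2 using fun j =>
      clamp_round ((x j - z j) / rc) K hK0 (ε / rc) (by positivity) (hcoord j)
    set y : Fin m → ℝ := fun j => z j + rc * r j with hy
    have hyz : dist y z ≤ rh / 2 := by
      rw [dist_pi_le_iff (by positivity)]
      intro j
      rw [Real.dist_eq]
      have : |rc * (r j : ℝ)| = rc * |(r j : ℝ)| := by rw [abs_mul, abs_of_pos hrc]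
      have hrK : |(r j : ℝ)| ≤ (K : ℝ) := by exact_mod_cast hr1 j
      calc |y j - z j| = rc * |(r j : ℝ)| := by rw [hy]; simp [abs_mul, abs_of_pos hrc]
        _ ≤ rc * K := by nlinarith
        _ ≤ rh / 2 := by rw [hq]; nlinarith
    have hyI : y ∈ Iop m rc rh Mh := by
      constructor
      · exact le_trans (Metric.infDist_le_dist_of_mem hz) hyz
      · intro j
        obtain ⟨k, hk⟩ := hMh hz j
        refine ⟨n * k + r j, ?_⟩
        rw [hy]; simp only; rw [hk, hq]; push_cast; ring
    have hxy : dist x y ≤ rc / 2 + ε := by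
      rw [dist_pi_le_iff (by positivity)]
      intro j
      rw [Real.dist_eq]
      have h2 := hr2 j
      have hxj : x j - y j = rc * ((x j - z j) / rc - r j) := by
        rw [hy]; field_simp; ring
      rw [hxj, abs_mul, abs_of_pos hrc]
      calc rc * |(x j - z j) / rc - (r j : ℝ)| ≤ rc * (1/2 + ε / rc) := by nlinarith
        _ = rc / 2 + ε := by field_simp
    exact le_trans (Metric.infDist_le_dist_of_mem hyI) hxy
  · -- (iii)
    intro Mc hMcg hMcne hcov y hy
    have h1 : Metric.infDist y Mc ≤ rc / 2 := hcov hy.1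
    obtain ⟨w, hw, hdw⟩ := (Metric.infDist_lt_iff hMcne).mp (lt_of_le_of_lt h1 (by linarith : rc / 2 < rc))
    have : y = w := by
      funext j
      obtain ⟨a, ha⟩ := hy.2 j
      obtain ⟨b, hb⟩ := hMcg hw j
      have hj : dist (y j) (w j) < rc := lt_of_le_of_lt (dist_le_pi_dist y w j) hdw
      rw [Real.dist_eq, ha, hb, ← mul_sub, abs_mul, abs_of_pos hrc] at hj
      have : |(a : ℝ) - b| < 1 := by
        by_contra h
        push_neg at h
        nlinarith
      have hab : a = b := by
        have h2 : |((a - b : ℤ) : ℝ)| < 1 := by push_cast; exact this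
        rw [← Int.cast_abs] at h2
        have h3 : |a - b| < 1 := by exact_mod_cast h2
        rw [abs_lt] at h3
        omega
      rw [ha, hb, hab]
    rw [this]; exact hw
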